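/- Let γ₁, γ₂ ∈ (-1, -1/2) with γ₁ + γ₂ > -3/2, let A ∈ ℝ, and define g(x,y) = (A/2)·(x₊^{γ₁} y₊^{γ₂} + x₊^{γ₂} y₊^{γ₁}). Then 2 · ∫_{[0,1]²} ∫_{ℝ²} g(s₁-x₁, s₁-x₂) g(s₂-x₂, s₂-x₁) dx₁dx₂ ds₁ds₂ = μ₂(γ₁,γ₂), where μ₂(γ₁,γ₂) = A² / ((γ₁+γ₂+2)(2(γ₁+γ₂)+3)) · [B(γ₁+1, -γ₁-γ₂-1)·B(γ₂+1, -γ₁-γ₂-1) + B(γ₁+1, -2γ₁-1)·B(γ₂+1, -2γ₂-1)]. (This quantity μ₂(γ₁,γ₂) is the second moment of the generalized Rosenblatt distribution Z_{γ₁,γ₂}(1).) -/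

import Mathlib

open MeasureTheory

/-- The Euler beta function `B(x,y) = Γ(x)Γ(y)/Γ(x+y)`. -/
noncomputable def eulerBeta (x y : ℝ) : ℝ := Real.Gamma x * Real.Gamma y / Real.Gamma (x + y)

/-- The generalized Rosenblatt kernel
`g(x,y) = (A/2) (x₊^{γ₁} y₊^{γ₂} + x₊^{γ₂} y₊^{γ₁})`. -/
noncomputable def genRosenblattKernel (A γ₁ γ₂ : ℝ) (x y : ℝ) : ℝ :=
  A / 2 * ((max x 0) ^ γ₁ * (max y 0) ^ γ₂ + (max x 0) ^ γ₂ * (max y 0) ^ γ₁)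

lemma realBeta_Ioo {a b : ℝ} (ha : 0 < a) (hb : 0 < b) :
    ∫ x in Set.Ioo (0:ℝ) 1, x ^ (a - 1) * (1 - x) ^ (b - 1) = eulerBeta a b := by
  have hre : 0 < (a : ℂ).re := by simpa using ha
  have hre' : 0 < (b : ℂ).re := by simpa using hb
  have h := Complex.Gamma_mul_Gamma_eq_betaIntegral hre hre'
  have hbeta : Complex.betaIntegral (a : ℂ) (b : ℂ)
      = ((∫ x in Set.Ioo (0:ℝ) 1, x ^ (a - 1) * (1 - x) ^ (b - 1) : ℝ) : ℂ) := by
    rw [Complex.betaIntegral, intervalIntegral.integral_of_le zero_le_one,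
      MeasureTheory.integral_Ioc_eq_integral_Ioo]
    have : ∀ x ∈ Set.Ioo (0:ℝ) 1, (x:ℂ) ^ ((a:ℂ) - 1) * (1 - (x:ℂ)) ^ ((b:ℂ) - 1)
        = ((x ^ (a - 1) * (1 - x) ^ (b - 1) : ℝ) : ℂ) := by
      intro x hx
      have hx0 : (0:ℝ) ≤ x := le_of_lt hx.1
      have hx1 : (0:ℝ) ≤ 1 - x := by linarith [le_of_lt hx.2]
      push_cast [Complex.ofReal_cpow hx0, Complex.ofReal_cpow hx1]
      norm_num
    rw [setIntegral_congr_fun measurableSet_Ioo this]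
    exact integral_ofReal
  rw [hbeta, ← Complex.ofReal_add a b, Complex.Gamma_ofReal, Complex.Gamma_ofReal,
    Complex.Gamma_ofReal, ← Complex.ofReal_mul, ← Complex.ofReal_mul] at h
  have h' := Complex.ofReal_injective h
  have hG : Real.Gamma (a + b) ≠ 0 := (Real.Gamma_pos_of_pos (by linarith)).ne'
  rw [eulerBeta, eq_div_iff hG]
  linarith [h']

lemma realBeta_Ioi {a b : ℝ} (ha : 0 < a) (hb : 0 < b) :
    ∫ t in Set.Ioi (0:ℝ), t ^ (a - 1) * (1 + t) ^ (-(a + b)) = eulerBeta a b := by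
  have himg : (fun x => x / (1 - x)) '' Set.Ioo (0:ℝ) 1 = Set.Ioi (0:ℝ) := by
    ext y
    constructor
    · rintro ⟨x, hx, rfl⟩
      exact div_pos hx.1 (by linarith [hx.2])
    · intro hy
      have hy' : 0 < y := hy
      have h1y : (0:ℝ) < 1 + y := by linarith
      refine ⟨y / (1 + y), ⟨div_pos hy' h1y, ?_⟩, ?_⟩
      · rw [div_lt_one h1y]; linarith
      · show (y / (1 + y)) / (1 - y / (1 + y)) = y
        have : 1 - y / (1 + y) = 1 / (1 + y) := by field_simp; ring
        rw [this]
        field_simp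
  have hderiv : ∀ x ∈ Set.Ioo (0:ℝ) 1,
      HasDerivWithinAt (fun x => x / (1 - x)) (((1 - x) ^ 2)⁻¹) (Set.Ioo (0:ℝ) 1) x := by
    intro x hx
    have h1x : (1:ℝ) - x ≠ 0 := by
      have h2 := hx.2; intro h; rw [sub_eq_zero] at h; linarith
    have h1 : HasDerivAt (fun x : ℝ => x / (1 - x))
        ((1 * (1 - x) - x * (0 - 1)) / (1 - x) ^ 2) x :=
      (hasDerivAt_id x).div ((hasDerivAt_const x (1:ℝ)).sub (hasDerivAt_id x)) h1x
    have : (1 * (1 - x) - x * (0 - 1)) / (1 - x) ^ 2 = ((1 - x) ^ 2)⁻¹ := by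
      field_simp
      ring
    rw [this] at h1
    exact h1.hasDerivWithinAt
  have hinj : Set.InjOn (fun x => x / (1 - x)) (Set.Ioo (0:ℝ) 1) := by
    intro x hx y hy h
    have hx1 : (1:ℝ) - x ≠ 0 := by have := hx.2; intro h'; linarith [hx.2, sub_eq_zero.mp h']
    have hy1 : (1:ℝ) - y ≠ 0 := by intro h'; linarith [hy.2, sub_eq_zero.mp h']
    field_simp at h
    linarith
  have := MeasureTheory.integral_image_eq_integral_abs_deriv_smul measurableSet_Ioo hderiv hinj
    (fun t => t ^ (a - 1) * (1 + t) ^ (-(a + b)))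
  rw [himg] at this
  rw [this, ← realBeta_Ioo ha hb]
  refine setIntegral_congr_fun measurableSet_Ioo fun x hx => ?_
  have hx0 : 0 < x := hx.1
  have h1x : 0 < 1 - x := by linarith [hx.2]
  have e1 : 1 + x / (1 - x) = (1 - x)⁻¹ := by field_simp; ring
  have e2 : (x / (1 - x)) ^ (a - 1) = x ^ (a - 1) * ((1 - x) ^ (a - 1))⁻¹ := by
    rw [div_eq_mul_inv, Real.mul_rpow hx0.le (by positivity), Real.inv_rpow h1x.le]
  have e3 : ((1 - x)⁻¹) ^ (-(a + b)) = (1 - x) ^ (a + b) := by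
    rw [Real.inv_rpow h1x.le, Real.rpow_neg h1x.le, inv_inv]
  have key : (((1 - x) ^ 2)⁻¹ : ℝ) * (((1 - x) ^ (a - 1))⁻¹ * (1 - x) ^ (a + b))
      = (1 - x) ^ (b - 1) := by
    rw [← Real.rpow_natCast (1 - x) 2, ← Real.rpow_neg h1x.le, ← Real.rpow_neg h1x.le,
      ← Real.rpow_add h1x, ← Real.rpow_add h1x]
    norm_num
    congr 1
    ring
  rw [smul_eq_mul, e1, e2, e3, abs_of_pos (by positivity), ← key]
  ring

lemma intOn_aux {α β : ℝ} (hα : -1 < α) (hαβ : α + β < -1) :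
    IntegrableOn (fun u : ℝ => u ^ α * (1 + u) ^ β) (Set.Ioi (0:ℝ)) := by
  have hβ : β < 0 := by linarith
  have hmeas0 : Measurable (fun u : ℝ => u ^ α * (1 + u) ^ β) :=
    (measurable_id.pow_const α).mul ((measurable_const.add measurable_id).pow_const β)
  rw [show Set.Ioi (0:ℝ) = Set.Ioc (0:ℝ) 1 ∪ Set.Ioi 1 by
    rw [Set.Ioc_union_Ioi_eq_Ioi zero_le_one]]
  refine IntegrableOn.union ?_ ?_
  · have h1 : IntegrableOn (fun u : ℝ => u ^ α) (Set.Ioc (0:ℝ) 1) := by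
      have := intervalIntegral.intervalIntegrable_rpow' (a := 0) (b := 1) hα
      rwa [intervalIntegrable_iff_integrableOn_Ioc_of_le zero_le_one] at this
    refine Integrable.mono h1 hmeas0.aestronglyMeasurable ?_
    filter_upwards [ae_restrict_mem measurableSet_Ioc] with u hu
    have hu0 : 0 < u := hu.1
    have h1u : (1:ℝ) ≤ 1 + u := by linarith
    rw [Real.norm_eq_abs, abs_mul, abs_of_nonneg (Real.rpow_nonneg hu0.le α),
      abs_of_nonneg (Real.rpow_nonneg (by linarith) β), Real.norm_eq_abs,
      abs_of_nonneg (Real.rpow_nonneg hu0.le α)]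
    nth_rewrite 2 [show u ^ α = u ^ α * 1 by ring]
    gcongr
    calc (1 + u) ^ β ≤ 1 ^ β := Real.rpow_le_rpow_of_nonpos one_pos h1u hβ.le
      _ = 1 := Real.one_rpow β
  · have h1 : IntegrableOn (fun u : ℝ => u ^ (α + β)) (Set.Ioi (1:ℝ)) :=
      integrableOn_Ioi_rpow_of_lt hαβ one_pos
    refine Integrable.mono h1 hmeas0.aestronglyMeasurable ?_
    filter_upwards [ae_restrict_mem measurableSet_Ioi] with u hu
    have hu1 : (1:ℝ) < u := hu
    have hu0 : (0:ℝ) < u := lt_trans one_pos hu1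
    rw [Real.norm_eq_abs, abs_mul, abs_of_nonneg (Real.rpow_nonneg hu0.le α),
      abs_of_nonneg (Real.rpow_nonneg (by linarith) β), Real.norm_eq_abs,
      abs_of_nonneg (Real.rpow_nonneg hu0.le (α + β)), Real.rpow_add hu0]
    exact mul_le_mul_of_nonneg_left
      (Real.rpow_le_rpow_of_nonpos hu0 (by linarith) hβ.le) (Real.rpow_nonneg hu0.le α)

section P
variable {α β s t : ℝ}

lemma P_setup (hst : s < t) :
    ((fun u : ℝ => s - (t - s) * u) '' Set.Ioi (0:ℝ) = Set.Iio s) ∧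
    (∀ u ∈ Set.Ioi (0:ℝ), HasDerivWithinAt (fun u : ℝ => s - (t - s) * u) (-(t - s))
      (Set.Ioi (0:ℝ)) u) ∧ Set.InjOn (fun u : ℝ => s - (t - s) * u) (Set.Ioi (0:ℝ)) := by
  have hc : 0 < t - s := sub_pos.mpr hst
  refine ⟨?_, fun u _ => ?_, fun u _ v _ h => ?_⟩
  · ext y
    simp only [Set.mem_image, Set.mem_Ioi, Set.mem_Iio]
    constructor
    · rintro ⟨u, hu, rfl⟩; nlinarith
    · intro hy
      exact ⟨(s - y) / (t - s), div_pos (by linarith) hc, by field_simp; ring⟩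
  · simpa using ((hasDerivAt_id u).const_mul (t - s)).const_sub s |>.hasDerivWithinAt
  · exact mul_left_cancel₀ hc.ne' (by dsimp at h; linarith : (t - s) * u = (t - s) * v)

lemma P_pt (hst : s < t) : ∀ u ∈ Set.Ioi (0:ℝ),
    |(-(t - s))| • ((max (s - (s - (t - s) * u)) 0) ^ α * (max (t - (s - (t - s) * u)) 0) ^ β)
      = ((t - s) ^ (α + β + 1)) * (u ^ α * (1 + u) ^ β) := by
  have hc : 0 < t - s := sub_pos.mpr hst
  intro u hu
  have hu0 : (0:ℝ) < u := hu
  have e1 : s - (s - (t - s) * u) = (t - s) * u := by ring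
  have e2 : t - (s - (t - s) * u) = (t - s) * (1 + u) := by ring
  rw [e1, e2, smul_eq_mul, abs_neg, abs_of_pos hc,
    max_eq_left (by positivity), max_eq_left (by positivity),
    Real.mul_rpow hc.le hu0.le, Real.mul_rpow hc.le (by linarith : (0:ℝ) ≤ 1 + u)]
  rw [show α + β + 1 = α + (β + 1) by ring, Real.rpow_add hc, Real.rpow_add hc, Real.rpow_one]
  ring

lemma P_int (hα : -1 < α) (hα0 : α < 0) (hαβ : α + β < -1) (hst : s < t) :
    Integrable (fun x : ℝ => (max (s - x) 0) ^ α * (max (t - x) 0) ^ β) := by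
  have hc : 0 < t - s := sub_pos.mpr hst
  obtain ⟨himg, hderiv, hinj⟩ := P_setup hst
  set f : ℝ → ℝ := fun x => (max (s - x) 0) ^ α * (max (t - x) 0) ^ β with hf
  have h0 : ∀ x ∉ Set.Iio s, f x = 0 := fun x hx => by
    have hxs : s ≤ x := not_lt.mp hx
    rw [hf]
    simp only
    rw [max_eq_right (by linarith : s - x ≤ 0), Real.zero_rpow hα0.ne, zero_mul]
  have hIntOn : IntegrableOn f (Set.Iio s) := by
    rw [← himg, MeasureTheory.integrableOn_image_iff_integrableOn_abs_deriv_smul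
      measurableSet_Ioi hderiv hinj]
    exact MeasureTheory.IntegrableOn.congr_fun
      ((intOn_aux hα hαβ).const_mul ((t - s) ^ (α + β + 1)))
      (fun u hu => (P_pt hst u hu).symm) measurableSet_Ioi
  have : f = Set.indicator (Set.Iio s) f :=
    (Set.indicator_eq_self.mpr (Function.support_subset_iff'.mpr h0)).symm
  rw [this]
  exact (integrable_indicator_iff measurableSet_Iio).2 hIntOn

lemma P_val (hα : -1 < α) (hα0 : α < 0) (hαβ : α + β < -1) (hst : s < t) :
    ∫ x : ℝ, (max (s - x) 0) ^ α * (max (t - x) 0) ^ β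
      = eulerBeta (α + 1) (-α - β - 1) * (t - s) ^ (α + β + 1) := by
  have hc : 0 < t - s := sub_pos.mpr hst
  obtain ⟨himg, hderiv, hinj⟩ := P_setup hst
  rw [← setIntegral_eq_integral_of_forall_compl_eq_zero
    (s := Set.Iio s) (fun x hx => by
      have hxs : s ≤ x := not_lt.mp hx
      rw [max_eq_right (by linarith : s - x ≤ 0), Real.zero_rpow hα0.ne, zero_mul])]
  rw [← himg, MeasureTheory.integral_image_eq_integral_abs_deriv_smul measurableSet_Ioi
    hderiv hinj]
  rw [setIntegral_congr_fun measurableSet_Ioi (P_pt hst)]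
  rw [MeasureTheory.integral_const_mul]
  have hBeta := realBeta_Ioi (show 0 < α + 1 by linarith) (show 0 < -α - β - 1 by linarith)
  simp only [show α + 1 - 1 = α from by ring,
    show -(α + 1 + (-α - β - 1)) = β from by ring] at hBeta
  rw [hBeta]
  ring
end P

lemma P_int' {α β s t : ℝ} (hα : -1 < α) (hα0 : α < 0) (hβ : -1 < β) (hβ0 : β < 0)
    (hαβ : α + β < -1) (hst : s ≠ t) :
    Integrable (fun x : ℝ => (max (s - x) 0) ^ α * (max (t - x) 0) ^ β) := by
  rcases hst.lt_or_gt with h | h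
  · exact P_int hα hα0 hαβ h
  · exact (P_int (α := β) (β := α) hβ hβ0 (by linarith) h).congr
      (Filter.Eventually.of_forall fun x => mul_comm _ _)

lemma P_val2 {α β s t : ℝ} (hβ : -1 < β) (hβ0 : β < 0) (hαβ : α + β < -1) (hts : t < s) :
    ∫ x : ℝ, (max (s - x) 0) ^ α * (max (t - x) 0) ^ β
      = eulerBeta (β + 1) (-β - α - 1) * (s - t) ^ (β + α + 1) := by
  rw [show (fun x : ℝ => (max (s - x) 0) ^ α * (max (t - x) 0) ^ β)
    = fun x : ℝ => (max (t - x) 0) ^ β * (max (s - x) 0) ^ α from funext fun x => mul_comm _ _]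
  exact P_val hβ hβ0 (by linarith) hts

lemma K_val {γ₁ γ₂ : ℝ} (h1 : γ₁ ∈ Set.Ioo (-1 : ℝ) (-1/2)) (h2 : γ₂ ∈ Set.Ioo (-1 : ℝ) (-1/2))
    (hsum : γ₁ + γ₂ > -3/2) (A : ℝ) {s₁ s₂ : ℝ} (hne : s₁ ≠ s₂) :
    (∫ x₁ : ℝ, ∫ x₂ : ℝ,
        genRosenblattKernel A γ₁ γ₂ (s₁ - x₁) (s₁ - x₂) *
          genRosenblattKernel A γ₁ γ₂ (s₂ - x₂) (s₂ - x₁))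
      = A ^ 2 / 2 *
          (eulerBeta (γ₁ + 1) (-γ₁ - γ₂ - 1) * eulerBeta (γ₂ + 1) (-γ₁ - γ₂ - 1) +
            eulerBeta (γ₁ + 1) (-2 * γ₁ - 1) * eulerBeta (γ₂ + 1) (-2 * γ₂ - 1)) *
          |s₁ - s₂| ^ (2 * (γ₁ + γ₂) + 2) := by
  obtain ⟨h1a, h1b⟩ := h1
  obtain ⟨h2a, h2b⟩ := h2
  set f₁₂ : ℝ → ℝ := fun x => (max (s₁ - x) 0) ^ γ₁ * (max (s₂ - x) 0) ^ γ₂ with hf12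
  set f₂₁ : ℝ → ℝ := fun x => (max (s₁ - x) 0) ^ γ₂ * (max (s₂ - x) 0) ^ γ₁ with hf21
  set f₁₁ : ℝ → ℝ := fun x => (max (s₁ - x) 0) ^ γ₁ * (max (s₂ - x) 0) ^ γ₁ with hf11
  set f₂₂ : ℝ → ℝ := fun x => (max (s₁ - x) 0) ^ γ₂ * (max (s₂ - x) 0) ^ γ₂ with hf22
  have hInt12 : Integrable f₁₂ := P_int' h1a (by linarith) h2a (by linarith) (by linarith) hne
  have hInt21 : Integrable f₂₁ := P_int' h2a (by linarith) h1a (by linarith) (by linarith) hne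
  have hInt11 : Integrable f₁₁ := P_int' h1a (by linarith) h1a (by linarith) (by linarith) hne
  have hInt22 : Integrable f₂₂ := P_int' h2a (by linarith) h2a (by linarith) (by linarith) hne
  have hinner : ∀ x₁ : ℝ,
      (∫ x₂ : ℝ, genRosenblattKernel A γ₁ γ₂ (s₁ - x₁) (s₁ - x₂) *
          genRosenblattKernel A γ₁ γ₂ (s₂ - x₂) (s₂ - x₁))
      = (A / 2) ^ 2 * (f₁₂ x₁ * (∫ x, f₂₁ x) + (f₁₁ x₁ * (∫ x, f₂₂ x)
          + (f₂₂ x₁ * (∫ x, f₁₁ x) + f₂₁ x₁ * (∫ x, f₁₂ x)))) := by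
    intro x₁
    have hptw : ∀ x₂ : ℝ, genRosenblattKernel A γ₁ γ₂ (s₁ - x₁) (s₁ - x₂) *
        genRosenblattKernel A γ₁ γ₂ (s₂ - x₂) (s₂ - x₁)
        = (A / 2) ^ 2 * (f₁₂ x₁ * f₂₁ x₂ + (f₁₁ x₁ * f₂₂ x₂
          + (f₂₂ x₁ * f₁₁ x₂ + f₂₁ x₁ * f₁₂ x₂))) := by
      intro x₂
      simp only [genRosenblattKernel, hf12, hf21, hf11, hf22]
      ring
    have i1 : Integrable (fun x => f₁₂ x₁ * f₂₁ x) := hInt21.const_mul _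
    have i2 : Integrable (fun x => f₁₁ x₁ * f₂₂ x) := hInt22.const_mul _
    have i3 : Integrable (fun x => f₂₂ x₁ * f₁₁ x) := hInt11.const_mul _
    have i4 : Integrable (fun x => f₂₁ x₁ * f₁₂ x) := hInt12.const_mul _
    have i34 : Integrable (fun x => f₂₂ x₁ * f₁₁ x + f₂₁ x₁ * f₁₂ x) := i3.add i4
    have i234 : Integrable (fun x => f₁₁ x₁ * f₂₂ x + (f₂₂ x₁ * f₁₁ x + f₂₁ x₁ * f₁₂ x)) :=
      i2.add i34
    rw [integral_congr_ae (Filter.Eventually.of_forall hptw), MeasureTheory.integral_const_mul,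
      integral_add i1 i234, integral_add i2 i34, integral_add i3 i4,
      MeasureTheory.integral_const_mul, MeasureTheory.integral_const_mul,
      MeasureTheory.integral_const_mul, MeasureTheory.integral_const_mul]
  have j1 : Integrable (fun x => f₁₂ x * ∫ y, f₂₁ y) := hInt12.mul_const _
  have j2 : Integrable (fun x => f₁₁ x * ∫ y, f₂₂ y) := hInt11.mul_const _
  have j3 : Integrable (fun x => f₂₂ x * ∫ y, f₁₁ y) := hInt22.mul_const _
  have j4 : Integrable (fun x => f₂₁ x * ∫ y, f₁₂ y) := hInt21.mul_const _
  have j34 : Integrable (fun x => f₂₂ x * (∫ y, f₁₁ y) + f₂₁ x * ∫ y, f₁₂ y) := j3.add j4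
  have j234 : Integrable (fun x => f₁₁ x * (∫ y, f₂₂ y)
      + (f₂₂ x * (∫ y, f₁₁ y) + f₂₁ x * ∫ y, f₁₂ y)) := j2.add j34
  rw [integral_congr_ae (Filter.Eventually.of_forall hinner), MeasureTheory.integral_const_mul,
    integral_add j1 j234, integral_add j2 j34, integral_add j3 j4,
    MeasureTheory.integral_mul_const, MeasureTheory.integral_mul_const,
    MeasureTheory.integral_mul_const, MeasureTheory.integral_mul_const]
  -- now compute the four integrals
  rcases hne.lt_or_gt with h | h
  · have hΔ : 0 < s₂ - s₁ := sub_pos.mpr h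
    have v12 : (∫ x, f₁₂ x) = eulerBeta (γ₁ + 1) (-γ₁ - γ₂ - 1) * (s₂ - s₁) ^ (γ₁ + γ₂ + 1) :=
      P_val h1a (by linarith) (by linarith) h
    have v21 : (∫ x, f₂₁ x) = eulerBeta (γ₂ + 1) (-γ₁ - γ₂ - 1) * (s₂ - s₁) ^ (γ₁ + γ₂ + 1) := by
      rw [hf21, P_val h2a (by linarith) (by linarith) h,
        show -γ₂ - γ₁ - 1 = -γ₁ - γ₂ - 1 by ring, show γ₂ + γ₁ + 1 = γ₁ + γ₂ + 1 by ring]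
    have v11 : (∫ x, f₁₁ x) = eulerBeta (γ₁ + 1) (-2 * γ₁ - 1) * (s₂ - s₁) ^ (γ₁ + γ₁ + 1) := by
      rw [hf11, P_val h1a (by linarith) (by linarith) h,
        show -γ₁ - γ₁ - 1 = -2 * γ₁ - 1 by ring]
    have v22 : (∫ x, f₂₂ x) = eulerBeta (γ₂ + 1) (-2 * γ₂ - 1) * (s₂ - s₁) ^ (γ₂ + γ₂ + 1) := by
      rw [hf22, P_val h2a (by linarith) (by linarith) h,
        show -γ₂ - γ₂ - 1 = -2 * γ₂ - 1 by ring]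
    have habs : |s₁ - s₂| = s₂ - s₁ := by rw [abs_sub_comm, abs_of_pos hΔ]
    have e1 : (s₂ - s₁) ^ (γ₁ + γ₂ + 1) * (s₂ - s₁) ^ (γ₁ + γ₂ + 1)
        = (s₂ - s₁) ^ (2 * (γ₁ + γ₂) + 2) := by
      rw [← Real.rpow_add hΔ]; congr 1; ring
    have e2 : (s₂ - s₁) ^ (γ₁ + γ₁ + 1) * (s₂ - s₁) ^ (γ₂ + γ₂ + 1)
        = (s₂ - s₁) ^ (2 * (γ₁ + γ₂) + 2) := by
      rw [← Real.rpow_add hΔ]; congr 1; ring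
    rw [v12, v21, v11, v22, habs]
    set B1 := eulerBeta (γ₁ + 1) (-γ₁ - γ₂ - 1)
    set B2 := eulerBeta (γ₂ + 1) (-γ₁ - γ₂ - 1)
    set B3 := eulerBeta (γ₁ + 1) (-2 * γ₁ - 1)
    set B4 := eulerBeta (γ₂ + 1) (-2 * γ₂ - 1)
    linear_combination (A ^ 2 / 2 * B1 * B2) * e1 + (A ^ 2 / 2 * B3 * B4) * e2
  · have hΔ : 0 < s₁ - s₂ := sub_pos.mpr h
    have v12 : (∫ x, f₁₂ x) = eulerBeta (γ₂ + 1) (-γ₁ - γ₂ - 1) * (s₁ - s₂) ^ (γ₁ + γ₂ + 1) := by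
      rw [hf12, P_val2 h2a (by linarith) (by linarith) h,
        show -γ₂ - γ₁ - 1 = -γ₁ - γ₂ - 1 by ring, show γ₂ + γ₁ + 1 = γ₁ + γ₂ + 1 by ring]
    have v21 : (∫ x, f₂₁ x) = eulerBeta (γ₁ + 1) (-γ₁ - γ₂ - 1) * (s₁ - s₂) ^ (γ₁ + γ₂ + 1) := by
      rw [hf21, P_val2 h1a (by linarith) (by linarith) h]
    have v11 : (∫ x, f₁₁ x) = eulerBeta (γ₁ + 1) (-2 * γ₁ - 1) * (s₁ - s₂) ^ (γ₁ + γ₁ + 1) := by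
      rw [hf11, P_val2 h1a (by linarith) (by linarith) h,
        show -γ₁ - γ₁ - 1 = -2 * γ₁ - 1 by ring]
    have v22 : (∫ x, f₂₂ x) = eulerBeta (γ₂ + 1) (-2 * γ₂ - 1) * (s₁ - s₂) ^ (γ₂ + γ₂ + 1) := by
      rw [hf22, P_val2 h2a (by linarith) (by linarith) h,
        show -γ₂ - γ₂ - 1 = -2 * γ₂ - 1 by ring]
    have habs : |s₁ - s₂| = s₁ - s₂ := abs_of_pos hΔ
    have e1 : (s₁ - s₂) ^ (γ₁ + γ₂ + 1) * (s₁ - s₂) ^ (γ₁ + γ₂ + 1)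
        = (s₁ - s₂) ^ (2 * (γ₁ + γ₂) + 2) := by
      rw [← Real.rpow_add hΔ]; congr 1; ring
    have e2 : (s₁ - s₂) ^ (γ₁ + γ₁ + 1) * (s₁ - s₂) ^ (γ₂ + γ₂ + 1)
        = (s₁ - s₂) ^ (2 * (γ₁ + γ₂) + 2) := by
      rw [← Real.rpow_add hΔ]; congr 1; ring
    rw [v12, v21, v11, v22, habs]
    set B1 := eulerBeta (γ₁ + 1) (-γ₁ - γ₂ - 1)
    set B2 := eulerBeta (γ₂ + 1) (-γ₁ - γ₂ - 1)
    set B3 := eulerBeta (γ₁ + 1) (-2 * γ₁ - 1)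
    set B4 := eulerBeta (γ₂ + 1) (-2 * γ₂ - 1)
    linear_combination (A ^ 2 / 2 * B1 * B2) * e1 + (A ^ 2 / 2 * B3 * B4) * e2

lemma absint {δ : ℝ} (hδ : -1 < δ) (hδ0 : δ < 0) {s : ℝ} (hs : s ∈ Set.Icc (0:ℝ) 1) :
    ∫ t in Set.Icc (0:ℝ) 1, |s - t| ^ δ = (s ^ (δ+1) + (1-s) ^ (δ+1)) / (δ+1) := by
  have habs : ∀ c : ℝ, 0 ≤ c → IntervalIntegrable (fun u : ℝ => |u| ^ δ) volume 0 c := by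
    intro c hc
    rw [intervalIntegrable_iff_integrableOn_Ioc_of_le hc]
    have base : IntegrableOn (fun u : ℝ => u ^ δ) (Set.Ioc 0 c) := by
      have := intervalIntegral.intervalIntegrable_rpow' (r := δ) (a := 0) (b := c) hδ
      rwa [intervalIntegrable_iff_integrableOn_Ioc_of_le hc] at this
    exact base.congr_fun (fun u hu => by rw [abs_of_pos hu.1]) measurableSet_Ioc
  have II1 : IntervalIntegrable (fun t : ℝ => |s - t| ^ δ) volume 0 s := by
    have h := ((habs s hs.1).comp_sub_left s).symm
    simpa using h
  have II2 : IntervalIntegrable (fun t : ℝ => |s - t| ^ δ) volume s 1 := by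
    have h := (habs (1 - s) (by linarith [hs.2])).comp_sub_right s
    simp only [zero_add, sub_add_cancel] at h
    rw [show (fun t : ℝ => |s - t| ^ δ) = fun t : ℝ => |t - s| ^ δ from
      funext fun t => by rw [abs_sub_comm]]
    exact h
  rw [MeasureTheory.integral_Icc_eq_integral_Ioc, ← intervalIntegral.integral_of_le zero_le_one,
    ← intervalIntegral.integral_add_adjacent_intervals II1 II2]
  have heq1 : Set.EqOn (fun u : ℝ => |u| ^ δ) (fun u : ℝ => u ^ δ) (Set.uIcc 0 s) := by
    intro u hu
    rw [Set.uIcc_of_le hs.1] at hu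
    simp only
    rw [abs_of_nonneg hu.1]
  have heq2 : Set.EqOn (fun u : ℝ => |u| ^ δ) (fun u : ℝ => u ^ δ) (Set.uIcc 0 (1 - s)) := by
    intro u hu
    rw [Set.uIcc_of_le (by linarith [hs.2] : (0:ℝ) ≤ 1 - s)] at hu
    simp only
    rw [abs_of_nonneg hu.1]
  have p1 : ∫ t in (0:ℝ)..s, |s - t| ^ δ = s ^ (δ+1) / (δ+1) := by
    rw [intervalIntegral.integral_comp_sub_left (fun u : ℝ => |u| ^ δ) s]
    simp only [sub_self, sub_zero]
    rw [intervalIntegral.integral_congr heq1, integral_rpow (Or.inl hδ),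
      Real.zero_rpow (by linarith : δ + 1 ≠ 0), sub_zero]
  have p2 : ∫ t in s..(1:ℝ), |s - t| ^ δ = (1 - s) ^ (δ+1) / (δ+1) := by
    rw [show (fun t : ℝ => |s - t| ^ δ) = fun t : ℝ => |t - s| ^ δ from
      funext fun t => by rw [abs_sub_comm]]
    rw [intervalIntegral.integral_comp_sub_right (fun u : ℝ => |u| ^ δ) s]
    simp only [sub_self]
    rw [intervalIntegral.integral_congr heq2, integral_rpow (Or.inl hδ),
      Real.zero_rpow (by linarith : δ + 1 ≠ 0), sub_zero]
  rw [p1, p2]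
  ring

/-- The second-moment formula for the generalized Rosenblatt distribution:
`2 ∫_{[0,1]²} ∫_{ℝ²} g(s₁-x₁,s₁-x₂) g(s₂-x₂,s₂-x₁) dx ds = μ₂(γ₁,γ₂)`, where
`μ₂(γ₁,γ₂) = A²/((γ₁+γ₂+2)(2(γ₁+γ₂)+3)) ·
  [B(γ₁+1,-γ₁-γ₂-1) B(γ₂+1,-γ₁-γ₂-1) + B(γ₁+1,-2γ₁-1) B(γ₂+1,-2γ₂-1)]`. -/
theorem second_moment_genRosenblatt
    (γ₁ γ₂ : ℝ) (h1 : γ₁ ∈ Set.Ioo (-1 : ℝ) (-1/2)) (h2 : γ₂ ∈ Set.Ioo (-1 : ℝ) (-1/2))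
    (hsum : γ₁ + γ₂ > -3/2) (A : ℝ) :
    2 * (∫ s₁ in Set.Icc (0 : ℝ) 1, ∫ s₂ in Set.Icc (0 : ℝ) 1, ∫ x₁ : ℝ, ∫ x₂ : ℝ,
          genRosenblattKernel A γ₁ γ₂ (s₁ - x₁) (s₁ - x₂) *
            genRosenblattKernel A γ₁ γ₂ (s₂ - x₂) (s₂ - x₁))
      = A ^ 2 / ((γ₁ + γ₂ + 2) * (2 * (γ₁ + γ₂) + 3)) *
          (eulerBeta (γ₁ + 1) (-γ₁ - γ₂ - 1) * eulerBeta (γ₂ + 1) (-γ₁ - γ₂ - 1) +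
            eulerBeta (γ₁ + 1) (-2 * γ₁ - 1) * eulerBeta (γ₂ + 1) (-2 * γ₂ - 1)) := by
  obtain ⟨h1a, h1b⟩ := h1
  obtain ⟨h2a, h2b⟩ := h2
  set S : ℝ := eulerBeta (γ₁ + 1) (-γ₁ - γ₂ - 1) * eulerBeta (γ₂ + 1) (-γ₁ - γ₂ - 1) +
      eulerBeta (γ₁ + 1) (-2 * γ₁ - 1) * eulerBeta (γ₂ + 1) (-2 * γ₂ - 1) with hS
  set δ : ℝ := 2 * (γ₁ + γ₂) + 2 with hδdef
  clear_value S δ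
  have hδ : -1 < δ := by rw [hδdef]; linarith
  have hδ0 : δ < 0 := by rw [hδdef]; linarith
  have hinner : ∀ s₁ ∈ Set.Icc (0:ℝ) 1,
      (∫ s₂ in Set.Icc (0 : ℝ) 1, ∫ x₁ : ℝ, ∫ x₂ : ℝ,
          genRosenblattKernel A γ₁ γ₂ (s₁ - x₁) (s₁ - x₂) *
            genRosenblattKernel A γ₁ γ₂ (s₂ - x₂) (s₂ - x₁))
      = A ^ 2 / 2 * S * ((s₁ ^ (δ+1) + (1-s₁) ^ (δ+1)) / (δ+1)) := by
    intro s₁ hs₁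
    have h0 : ∀ᵐ (s₂ : ℝ), s₂ ≠ s₁ := by
      refine ae_iff.mpr ?_
      simpa using measure_singleton s₁
    have hae : (fun s₂ => ∫ x₁ : ℝ, ∫ x₂ : ℝ,
          genRosenblattKernel A γ₁ γ₂ (s₁ - x₁) (s₁ - x₂) *
            genRosenblattKernel A γ₁ γ₂ (s₂ - x₂) (s₂ - x₁))
        =ᵐ[volume.restrict (Set.Icc (0:ℝ) 1)] fun s₂ => A ^ 2 / 2 * S * |s₁ - s₂| ^ δ := by
      refine ae_restrict_of_ae ?_
      filter_upwards [h0] with s₂ hs₂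
      rw [hS, hδdef]
      exact K_val ⟨h1a, h1b⟩ ⟨h2a, h2b⟩ hsum A hs₂.symm
    rw [integral_congr_ae hae, MeasureTheory.integral_const_mul, absint hδ hδ0 hs₁]
  rw [setIntegral_congr_fun measurableSet_Icc hinner, MeasureTheory.integral_const_mul]
  have ia : IntegrableOn (fun s : ℝ => s ^ (δ+1)) (Set.Icc (0:ℝ) 1) := by
    rw [integrableOn_Icc_iff_integrableOn_Ioc]
    have := intervalIntegral.intervalIntegrable_rpow' (r := δ+1) (a := 0) (b := 1)
      (by linarith)
    rwa [intervalIntegrable_iff_integrableOn_Ioc_of_le zero_le_one] at this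
  have ib : IntegrableOn (fun s : ℝ => (1-s) ^ (δ+1)) (Set.Icc (0:ℝ) 1) := by
    rw [integrableOn_Icc_iff_integrableOn_Ioc]
    have h := (intervalIntegral.intervalIntegrable_rpow' (r := δ+1) (a := 0) (b := 1)
      (by linarith)).comp_sub_left 1 |>.symm
    simp only [sub_zero, sub_self] at h
    rwa [intervalIntegrable_iff_integrableOn_Ioc_of_le zero_le_one] at h
  have key : (∫ s₁ in Set.Icc (0:ℝ) 1, (s₁ ^ (δ+1) + (1-s₁) ^ (δ+1)) / (δ+1))
      = 2 / ((δ+1) * (δ+2)) := by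
    rw [show (fun s₁ : ℝ => (s₁ ^ (δ+1) + (1-s₁) ^ (δ+1)) / (δ+1))
      = fun s₁ : ℝ => (s₁ ^ (δ+1) + (1-s₁) ^ (δ+1)) / (δ+1) from rfl]
    rw [MeasureTheory.integral_div, integral_add ia ib]
    have q1 : (∫ s in Set.Icc (0:ℝ) 1, s ^ (δ+1)) = 1 / (δ+2) := by
      rw [MeasureTheory.integral_Icc_eq_integral_Ioc,
        ← intervalIntegral.integral_of_le zero_le_one, integral_rpow (Or.inl (by linarith)),
        Real.one_rpow, Real.zero_rpow (by linarith : δ + 1 + 1 ≠ 0)]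
      rw [show δ + 1 + 1 = δ + 2 by ring]
      norm_num
    have q2 : (∫ s in Set.Icc (0:ℝ) 1, (1-s) ^ (δ+1)) = 1 / (δ+2) := by
      rw [MeasureTheory.integral_Icc_eq_integral_Ioc,
        ← intervalIntegral.integral_of_le zero_le_one,
        intervalIntegral.integral_comp_sub_left (fun u : ℝ => u ^ (δ+1)) 1]
      simp only [sub_zero, sub_self]
      rw [integral_rpow (Or.inl (by linarith)),
        Real.one_rpow, Real.zero_rpow (by linarith : δ + 1 + 1 ≠ 0)]
      rw [show δ + 1 + 1 = δ + 2 by ring]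
      norm_num
    rw [q1, q2]
    field_simp
    ring
  rw [key, hδdef]
  have h3 : (0:ℝ) < 2 * (γ₁ + γ₂) + 3 := by linarith
  have h4 : (0:ℝ) < γ₁ + γ₂ + 2 := by linarith
  rw [show 2 * (γ₁ + γ₂) + 2 + 1 = 2 * (γ₁ + γ₂) + 3 by ring,
    show 2 * (γ₁ + γ₂) + 2 + 2 = 2 * (γ₁ + γ₂ + 2) by ring]
  field_simp
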